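/- Let D be a cDG containing every loop and let α,β be nodes joined in D by a weak inducing path consisting solely of blunt edges. Then adding the blunt edge α⫞β to D yields a Markov equivalent cDG. -/

import Mathlib

universe u

/-- A directed correlation graph (cDG): directed edges (loops allowed) and
blunt edges (symmetric, no loops). -/
structure CDG (V : Type u) where
  dir : V → V → Prop
  blunt : V → V → Prop
  blunt_symm : ∀ a b, blunt a b → blunt b a
  blunt_irrefl : ∀ a, ¬ blunt a a

namespace CDG

variable {V : Type u}

/-- `anc D a b` : `a` is an ancestor of `b` (directed path from `a` to `b`;
every node is its own ancestor). -/
def anc (D : CDG V) (a b : V) : Prop := Relation.ReflTransGen D.dir a b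

/-- `an(C)`: the set of ancestors of `C`. -/
def ancSet (D : CDG V) (C : Set V) : Set V := {a | ∃ c ∈ C, D.anc a c}

/-- An edge instance between `a` and `b`, with its orientation. -/
inductive Edge (D : CDG V) : V → V → Type u
  | fwd {a b : V} : D.dir a b → Edge D a b
  | bwd {a b : V} : D.dir b a → Edge D a b
  | bl  {a b : V} : D.blunt a b → Edge D a b

/-- The edge has a neck (head or stump) at its left endpoint. -/
def Edge.neckLeft {D : CDG V} {a b : V} : D.Edge a b → Prop
  | .fwd _ => False
  | .bwd _ => True
  | .bl _ => True

/-- The edge has a neck (head or stump) at its right endpoint. -/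
def Edge.neckRight {D : CDG V} {a b : V} : D.Edge a b → Prop
  | .fwd _ => True
  | .bwd _ => False
  | .bl _ => True

/-- The edge has a head (arrowhead) at its right endpoint. -/
def Edge.headRight {D : CDG V} {a b : V} : D.Edge a b → Prop
  | .fwd _ => True
  | _ => False

/-- The edge is a blunt edge. -/
def Edge.isBlunt {D : CDG V} {a b : V} : D.Edge a b → Prop
  | .bl _ => True
  | _ => False

/-- A walk from `a` to `b` in `D`. -/
inductive Walk (D : CDG V) : V → V → Type u
  | nil (a : V) : Walk D a a
  | cons {a m c : V} : D.Edge a m → Walk D m c → Walk D a c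

namespace Walk

variable {D : CDG V}

def length : ∀ {a b : V}, D.Walk a b → ℕ
  | _, _, .nil _ => 0
  | _, _, .cons _ w => w.length + 1

def support : ∀ {a b : V}, D.Walk a b → List V
  | a, _, .nil _ => [a]
  | a, _, .cons _ w => a :: w.support

/-- The list of nonendpoint (internal) node instances of a walk. -/
def internal : ∀ {a b : V}, D.Walk a b → List V
  | _, _, .nil _ => []
  | _, _, .cons _ (.nil _) => []
  | _, _, .cons (m := m) _ w => m :: w.internal

/-- The final edge of the walk has a head at the terminal node. -/
def lastHead : ∀ {a b : V}, D.Walk a b → Prop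
  | _, _, .nil _ => False
  | _, _, .cons e (.nil _) => e.headRight
  | _, _, .cons _ w => w.lastHead

/-- Every collider on the walk is in `an(C)` and no noncollider is in `C`. -/
def mOpen (C : Set V) : ∀ {a b : V}, D.Walk a b → Prop
  | _, _, .nil _ => True
  | _, _, .cons _ (.nil _) => True
  | _, _, .cons (m := m) e₁ (.cons e₂ w) =>
      ((e₁.neckRight ∧ e₂.neckLeft) → m ∈ D.ancSet C) ∧
      (¬ (e₁.neckRight ∧ e₂.neckLeft) → m ∉ C) ∧
      mOpen C (Walk.cons e₂ w)

/-- Every nonendpoint node of the walk is a collider. -/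
def allColliders : ∀ {a b : V}, D.Walk a b → Prop
  | _, _, .nil _ => True
  | _, _, .cons _ (.nil _) => True
  | _, _, .cons e₁ (.cons e₂ w) =>
      e₁.neckRight ∧ e₂.neckLeft ∧ allColliders (Walk.cons e₂ w)

/-- Every edge of the walk is blunt. -/
def allBlunt : ∀ {a b : V}, D.Walk a b → Prop
  | _, _, .nil _ => True
  | _, _, .cons e w => e.isBlunt ∧ w.allBlunt

end Walk

/-- There is a μ-connecting walk from `a` to `b` given `C`. -/
def muConn (D : CDG V) (C : Set V) (a b : V) : Prop :=
  a ∉ C ∧ ∃ w : D.Walk a b, w.mOpen C ∧ w.lastHead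

/-- `B` is μ-separated from `A` given `C`. -/
def muSep (D : CDG V) (A B C : Set V) : Prop :=
  ∀ a ∈ A, ∀ b ∈ B, ¬ D.muConn C a b

/-- The independence model of `D`: all μ-separation triples. -/
def indep (D : CDG V) : Set (Set V × Set V × Set V) :=
  {p | D.muSep p.1 p.2.1 p.2.2}

/-- A (nontrivial) collider path. -/
def IsColliderPath {D : CDG V} {a b : V} (w : D.Walk a b) : Prop :=
  0 < w.length ∧ w.support.Nodup ∧ w.allColliders

/-- `a` and `b` are collider connected: some nontrivial walk between them has
every nonendpoint node a collider. -/
def colliderConn (D : CDG V) (a b : V) : Prop :=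
  ∃ w : D.Walk a b, 0 < w.length ∧ w.allColliders

/-- A weak inducing path from `a` to `b`: a collider path whose nonendpoint
nodes are all ancestors of `a` or of `b`. -/
def WeakInducing (D : CDG V) (a b : V) : Prop :=
  ∃ w : D.Walk a b, IsColliderPath w ∧ ∀ m ∈ w.internal, D.anc m a ∨ D.anc m b

/-- A weak inducing path between `a` and `b` (in either direction). -/
def WeakInducingBetween (D : CDG V) (a b : V) : Prop :=
  D.WeakInducing a b ∨ D.WeakInducing b a

end CDG

/-- The cDG obtained by adding the blunt edge α⫞β. -/
def CDG.addBlunt {V : Type} (D : CDG V) (α β : V) (hne : α ≠ β) : CDG V where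
  dir := D.dir
  blunt a b := D.blunt a b ∨ (a = α ∧ b = β) ∨ (a = β ∧ b = α)
  blunt_symm := by
    rintro a b (h | ⟨rfl, rfl⟩ | ⟨rfl, rfl⟩)
    · exact Or.inl (D.blunt_symm _ _ h)
    · exact Or.inr (Or.inr ⟨rfl, rfl⟩)
    · exact Or.inr (Or.inl ⟨rfl, rfl⟩)
  blunt_irrefl := by
    rintro a (h | ⟨rfl, h2⟩ | ⟨rfl, h2⟩)
    · exact D.blunt_irrefl a h
    · exact hne h2
    · exact hne h2.symm

/-! ### Auxiliary development -/

namespace CDG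

variable {V : Type u} {D : CDG V}

/-- The junction condition at an internal node `m` with neighbouring
neck-statuses `nr` (from the left edge) and `nl` (from the right edge). -/
def Jct (D : CDG V) (C : Set V) (nr nl : Prop) (m : V) : Prop :=
  ((nr ∧ nl) → m ∈ D.ancSet C) ∧ (¬ (nr ∧ nl) → m ∉ C)

lemma Jct_congr {C : Set V} {nr nr' nl nl' : Prop} {m : V}
    (h1 : nr ↔ nr') (h2 : nl ↔ nl') : D.Jct C nr nl m ↔ D.Jct C nr' nl' m := by
  unfold Jct; rw [h1, h2]

lemma mem_ancSet_of_anc {C : Set V} {x y : V} (hxy : D.anc x y)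
    (hy : y ∈ D.ancSet C) : x ∈ D.ancSet C := by
  obtain ⟨c, hc, hyc⟩ := hy
  exact ⟨c, hc, Relation.ReflTransGen.trans hxy hyc⟩

lemma mem_ancSet_of_mem {C : Set V} {x : V} (hx : x ∈ C) : x ∈ D.ancSet C :=
  ⟨x, hx, Relation.ReflTransGen.refl⟩

lemma not_mem_of_not_mem_ancSet {C : Set V} {x : V} (hx : x ∉ D.ancSet C) :
    x ∉ C := fun h => hx (mem_ancSet_of_mem h)

namespace Walk

def append : ∀ {a m b : V}, D.Walk a m → D.Walk m b → D.Walk a b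
  | _, _, _, .nil _, w₂ => w₂
  | _, _, _, .cons e w, w₂ => .cons e (append w w₂)

/-- Neck-status at the left end of the first edge (`True` for `nil`). -/
def firstNL : ∀ {a b : V}, D.Walk a b → Prop
  | _, _, .nil _ => True
  | _, _, .cons e _ => e.neckLeft

/-- Neck-status at the right end of the last edge (`True` for `nil`). -/
def lastNR : ∀ {a b : V}, D.Walk a b → Prop
  | _, _, .nil _ => True
  | _, _, .cons e (.nil _) => e.neckRight
  | _, _, .cons _ w => lastNR w

variable {C : Set V}

lemma length_append : ∀ {a m b : V} (w₁ : D.Walk a m) (w₂ : D.Walk m b),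
    (append w₁ w₂).length = w₁.length + w₂.length
  | _, _, _, .nil _, w₂ => by simp [append, length]
  | _, _, _, .cons e w, w₂ => by
      simp [append, length, length_append w w₂]; omega

lemma lastNR_cons {a m b : V} (e : D.Edge a m) {w : D.Walk m b}
    (hw : 0 < w.length) : (Walk.cons e w).lastNR ↔ w.lastNR := by
  cases w with
  | nil => simp [length] at hw
  | cons e' w' => exact Iff.rfl

lemma lastHead_cons {a m b : V} (e : D.Edge a m) {w : D.Walk m b}
    (hw : 0 < w.length) : (Walk.cons e w).lastHead ↔ w.lastHead := by
  cases w with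
  | nil => simp [length] at hw
  | cons e' w' => exact Iff.rfl

lemma lastHead_cons0 {a m b : V} (e : D.Edge a m) {w : D.Walk m b}
    (hw : w.length = 0) : (Walk.cons e w).lastHead ↔ e.headRight := by
  cases w with
  | nil => exact Iff.rfl
  | cons e' w' => simp [length] at hw

lemma mOpen_cons {a m b : V} (e : D.Edge a m) {w : D.Walk m b}
    (hw : 0 < w.length) :
    (Walk.cons e w).mOpen C ↔ (D.Jct C e.neckRight w.firstNL m ∧ w.mOpen C) := by
  cases w with
  | nil => simp [length] at hw
  | cons e' w' =>
      constructor
      · rintro ⟨h1, h2, h3⟩; exact ⟨⟨h1, h2⟩, h3⟩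
      · rintro ⟨⟨h1, h2⟩, h3⟩; exact ⟨h1, h2, h3⟩

lemma mOpen_cons0 {a m b : V} (e : D.Edge a m) {w : D.Walk m b}
    (hw : w.length = 0) : (Walk.cons e w).mOpen C := by
  cases w with
  | nil => trivial
  | cons e' w' => simp [length] at hw

lemma firstNL_append {a m b : V} {w₁ : D.Walk a m} (w₂ : D.Walk m b)
    (h : 0 < w₁.length) : (append w₁ w₂).firstNL ↔ w₁.firstNL := by
  cases w₁ with
  | nil => simp [length] at h
  | cons e w => exact Iff.rfl

lemma append_nil : ∀ {a b : V} (w : D.Walk a b), append w (Walk.nil b) = w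
  | _, _, .nil _ => rfl
  | _, _, .cons e w => by rw [append, append_nil w]

lemma lastNR_append : ∀ {a m b : V} (w₁ : D.Walk a m) {w₂ : D.Walk m b},
    0 < w₂.length → ((append w₁ w₂).lastNR ↔ w₂.lastNR)
  | _, _, _, .nil _, w₂, _ => Iff.rfl
  | _, _, _, .cons e w, w₂, h2 => by
      rw [append, lastNR_cons _ (by rw [length_append]; omega),
        lastNR_append w h2]

lemma lastHead_append : ∀ {a m b : V} (w₁ : D.Walk a m) {w₂ : D.Walk m b},
    0 < w₂.length → ((append w₁ w₂).lastHead ↔ w₂.lastHead)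
  | _, _, _, .nil _, w₂, _ => Iff.rfl
  | _, _, _, .cons e w, w₂, h2 => by
      rw [append, lastHead_cons _ (by rw [length_append]; omega),
        lastHead_append w h2]

lemma mOpen_append : ∀ {a m b : V} (w₁ : D.Walk a m) {w₂ : D.Walk m b},
    0 < w₁.length → 0 < w₂.length →
    ((append w₁ w₂).mOpen C ↔
      (w₁.mOpen C ∧ D.Jct C w₁.lastNR w₂.firstNL m ∧ w₂.mOpen C))
  | _, _, _, .nil _, w₂, h1, _ => by simp [length] at h1
  | _, _, _, .cons e (.nil _), w₂, _, h2 => by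
      rw [append, append, mOpen_cons _ h2]
      simp only [mOpen, lastNR, true_and]
  | _, _, _, .cons e (.cons e' w), w₂, _, h2 => by
      rw [append, mOpen_cons _ (by rw [length_append]; simp [length]),
        mOpen_cons _ (by simp [length]),
        firstNL_append _ (by simp [length]),
        mOpen_append (Walk.cons e' w) (by simp [length]) h2,
        lastNR_cons e (w := Walk.cons e' w) (by simp [length])]
      tauto

lemma support_eq : ∀ {a b : V} (w : D.Walk a b), 0 < w.length →
    w.support = a :: (w.internal ++ [b])
  | _, _, .cons e (.nil _), _ => rfl
  | _, _, .cons e (.cons e' w), _ => by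
      exact congrArg (List.cons _) (support_eq (Walk.cons e' w) (by simp [length]))

lemma toChain : ∀ {a b : V} (w : D.Walk a b), 0 < w.length → w.allBlunt →
    List.Chain D.blunt a (w.internal ++ [b])
  | _, _, .cons e (.nil _), _, hb => by
      cases e with
      | fwd h => exact absurd hb.1 not_false
      | bwd h => exact absurd hb.1 not_false
      | bl h => exact List.Chain.cons h (List.Chain.nil)
  | _, _, .cons e (.cons e' w), _, hb => by
      have := toChain (Walk.cons e' w) (by simp [length]) hb.2
      cases e with
      | fwd h => exact absurd hb.1 not_false
      | bwd h => exact absurd hb.1 not_false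
      | bl h => exact List.Chain.cons h this

/-- Walks all of whose edges are forward directed edges. -/
def allFwd : ∀ {a b : V}, D.Walk a b → Prop
  | _, _, .nil _ => True
  | _, _, .cons e w => (match e with | .fwd _ => True | _ => False) ∧ allFwd w

/-- Walks all of whose edges are backward directed edges. -/
def allBwd : ∀ {a b : V}, D.Walk a b → Prop
  | _, _, .nil _ => True
  | _, _, .cons e w => (match e with | .bwd _ => True | _ => False) ∧ allBwd w

lemma allFwd_internal_desc : ∀ {a b : V} (w : D.Walk a b), w.allFwd →
    ∀ q ∈ w.internal, D.anc a q
  | _, _, .nil _, _, q, hq => by simp [internal] at hq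
  | _, _, .cons e (.nil _), _, q, hq => by simp [internal] at hq
  | _, _, .cons e (.cons e' w), hf, q, hq => by
      cases e with
      | fwd h =>
          rcases List.mem_cons.mp hq with rfl | hq
          · exact Relation.ReflTransGen.single h
          · exact Relation.ReflTransGen.head h
              (allFwd_internal_desc (Walk.cons e' w) hf.2 q hq)
      | bwd h => exact absurd hf.1 not_false
      | bl h => exact absurd hf.1 not_false

lemma allBwd_anc : ∀ {a b : V} (w : D.Walk a b), w.allBwd →
    Relation.ReflTransGen D.dir b a
  | _, _, .nil _, _ => Relation.ReflTransGen.refl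
  | _, _, .cons e w, hf => by
      cases e with
      | fwd h => exact absurd hf.1 not_false
      | bwd h => exact Relation.ReflTransGen.tail (allBwd_anc w hf.2) h
      | bl h => exact absurd hf.1 not_false

lemma allBwd_internal_desc : ∀ {a b : V} (w : D.Walk a b), w.allBwd →
    ∀ q ∈ w.internal, D.anc b q
  | _, _, .nil _, _, q, hq => by simp [internal] at hq
  | _, _, .cons e (.nil _), _, q, hq => by simp [internal] at hq
  | _, _, .cons e (.cons e' w), hf, q, hq => by
      rcases List.mem_cons.mp hq with rfl | hq
      · exact allBwd_anc (Walk.cons e' w) hf.2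
      · exact allBwd_internal_desc (Walk.cons e' w) hf.2 q hq

lemma allFwd_mOpen {C : Set V} : ∀ {a b : V} (w : D.Walk a b), w.allFwd →
    (∀ q ∈ w.internal, q ∉ C) → w.mOpen C
  | _, _, .nil _, _, _ => trivial
  | _, _, .cons e (.nil _), _, _ => trivial
  | _, _, .cons e (.cons e' w), hf, hint => by
      cases e' with
      | fwd h' =>
          refine ⟨fun hc => absurd hc.2 ?_, fun _ => hint _ (by simp [internal]),
            allFwd_mOpen (Walk.cons (Edge.fwd h') w) hf.2
              (fun q hq => hint q (by simp [internal]; exact Or.inr hq))⟩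
          intro hh; exact hh
      | bwd h' => exact absurd hf.2.1 not_false
      | bl h' => exact absurd hf.2.1 not_false

lemma allBwd_mOpen {C : Set V} : ∀ {a b : V} (w : D.Walk a b), w.allBwd →
    (∀ q ∈ w.internal, q ∉ C) → w.mOpen C
  | _, _, .nil _, _, _ => trivial
  | _, _, .cons e (.nil _), _, _ => trivial
  | _, _, .cons e (.cons e' w), hf, hint => by
      cases e with
      | bwd h =>
          exact ⟨fun hc => absurd hc.1 not_false,
            fun _ => hint _ (by simp [internal]),
            allBwd_mOpen (Walk.cons e' w) hf.2
              (fun q hq => hint q (by simp [internal]; exact Or.inr hq))⟩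
      | fwd h => exact absurd hf.1 not_false
      | bl h => exact absurd hf.1 not_false

/-- A forward directed walk realizing an ancestor relation. -/
lemma exists_allFwd {x y : V} (hxy : D.anc x y) :
    ∃ p : D.Walk x y, p.allFwd ∧ (x ≠ y → 0 < p.length) := by
  induction hxy using Relation.ReflTransGen.head_induction_on with
  | refl => exact ⟨Walk.nil y, trivial, fun h => absurd rfl h⟩
  | head h _ ih =>
      obtain ⟨p, hp, _⟩ := ih
      exact ⟨Walk.cons (Edge.fwd h) p, ⟨trivial, hp⟩, fun _ => by simp [length]⟩

/-- A backward directed walk realizing an ancestor relation. -/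
lemma exists_allBwd {x α : V} (hxα : D.anc x α) :
    ∃ p : D.Walk α x, p.allBwd ∧ (x ≠ α → 0 < p.length) := by
  induction hxα with
  | refl => exact ⟨Walk.nil x, trivial, fun h => absurd rfl h⟩
  | tail _ h ih =>
      obtain ⟨p, hp, _⟩ := ih
      exact ⟨Walk.cons (Edge.bwd h) p, ⟨trivial, hp⟩, fun _ => by simp [length]⟩

lemma allFwd_firstNL : ∀ {a b : V} (w : D.Walk a b), w.allFwd → 0 < w.length →
    ¬ w.firstNL
  | _, _, .nil _, _, hl => by simp [length] at hl
  | _, _, .cons e w, hf, _ => by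
      cases e with
      | fwd h => exact not_false
      | bwd h => exact absurd hf.1 not_false
      | bl h => exact absurd hf.1 not_false

lemma allFwd_lastNR : ∀ {a b : V} (w : D.Walk a b), w.allFwd → w.lastNR
  | _, _, .nil _, _ => trivial
  | _, _, .cons e (.nil _), hf => by
      cases e with
      | fwd h => trivial
      | bwd h => exact absurd hf.1 not_false
      | bl h => exact absurd hf.1 not_false
  | _, _, .cons e (.cons e' w), hf => allFwd_lastNR (Walk.cons e' w) hf.2

lemma allBwd_firstNL : ∀ {a b : V} (w : D.Walk a b), w.allBwd → 0 < w.length →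
    w.firstNL
  | _, _, .nil _, _, hl => by simp [length] at hl
  | _, _, .cons e w, hf, _ => by
      cases e with
      | fwd h => exact absurd hf.1 not_false
      | bwd h => exact trivial
      | bl h => exact absurd hf.1 not_false

lemma allBwd_lastNR : ∀ {a b : V} (w : D.Walk a b), w.allBwd → 0 < w.length →
    ¬ w.lastNR
  | _, _, .nil _, _, hl => by simp [length] at hl
  | _, _, .cons e (.nil _), hf, _ => by
      cases e with
      | fwd h => exact absurd hf.1 not_false
      | bwd h => exact not_false
      | bl h => exact absurd hf.1 not_false
  | _, _, .cons e (.cons e' w), hf, _ =>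
      allBwd_lastNR (Walk.cons e' w) hf.2 (by simp [length])

/-- A μ-open forward detour from `x` to `y`, when `x ∉ an(C)`. -/
lemma exists_fwdWalk (C : Set V) {x y : V} (hxy : D.anc x y) (hne : x ≠ y)
    (hxC : x ∉ D.ancSet C) :
    ∃ p : D.Walk x y, 0 < p.length ∧ p.mOpen C ∧ ¬ p.firstNL ∧ p.lastNR := by
  obtain ⟨p, hf, hl⟩ := exists_allFwd hxy
  have hlen := hl hne
  have hint : ∀ q ∈ p.internal, q ∉ C := fun q hq hqC =>
    hxC (mem_ancSet_of_anc (allFwd_internal_desc p hf q hq)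
      (mem_ancSet_of_mem hqC))
  exact ⟨p, hlen, allFwd_mOpen p hf hint, allFwd_firstNL p hf hlen,
    allFwd_lastNR p hf⟩

/-- A μ-open backward detour from `α` down to `x`, when `x ∉ an(C)`. -/
lemma exists_bwdWalk (C : Set V) {x α : V} (hxα : D.anc x α) (hne : x ≠ α)
    (hxC : x ∉ D.ancSet C) :
    ∃ p : D.Walk α x, 0 < p.length ∧ p.mOpen C ∧ p.firstNL ∧ ¬ p.lastNR := by
  obtain ⟨p, hf, hl⟩ := exists_allBwd hxα
  have hlen := hl hne
  have hint : ∀ q ∈ p.internal, q ∉ C := fun q hq hqC =>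
    hxC (mem_ancSet_of_anc (allBwd_internal_desc p hf q hq)
      (mem_ancSet_of_mem hqC))
  exact ⟨p, hlen, allBwd_mOpen p hf hint, allBwd_firstNL p hf hlen,
    allBwd_lastNR p hf hlen⟩

lemma mOpen_append_right0 {C : Set V} {a m b : V} (w₁ : D.Walk a m)
    {w₂ : D.Walk m b} (h : w₂.length = 0) (h₁ : w₁.mOpen C) :
    (append w₁ w₂).mOpen C := by
  cases w₂ with
  | nil => rw [append_nil]; exact h₁
  | cons e w => simp [length] at h

end Walk

open Walk in
/-- The right-to-left greedy open walk towards `β` along a blunt chain. -/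
lemma gWalk (C : Set V) {β : V} :
    ∀ (L : List V) (x : V), List.Chain D.blunt x (L ++ [β]) →
      (∀ m ∈ L, m ∈ D.ancSet C ∨ (D.anc m β ∧ m ≠ β)) →
      ∃ u : D.Walk x β, 0 < u.length ∧ u.mOpen C ∧ u.lastNR ∧
        ((u.firstNL ∧ (x ∈ D.ancSet C ∨ ¬(D.anc x β ∧ x ≠ β))) ∨
          (¬ u.firstNL ∧ x ∉ D.ancSet C)) := by
  intro L
  induction L with
  | nil =>
      intro x hch hpre
      by_cases hdet : x ∉ D.ancSet C ∧ (D.anc x β ∧ x ≠ β)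
      · obtain ⟨p, h1, h2, h3, h4⟩ := exists_fwdWalk C hdet.2.1 hdet.2.2 hdet.1
        exact ⟨p, h1, h2, h4, Or.inr ⟨h3, hdet.1⟩⟩
      · have hb : D.blunt x β := (List.chain_cons.mp hch).1
        refine ⟨Walk.cons (Edge.bl hb) (Walk.nil β), by simp [length], trivial,
          trivial, Or.inl ⟨trivial, by tauto⟩⟩
  | cons m L' ih =>
      intro x hch hpre
      by_cases hdet : x ∉ D.ancSet C ∧ (D.anc x β ∧ x ≠ β)
      · obtain ⟨p, h1, h2, h3, h4⟩ := exists_fwdWalk C hdet.2.1 hdet.2.2 hdet.1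
        exact ⟨p, h1, h2, h4, Or.inr ⟨h3, hdet.1⟩⟩
      · have hxm : D.blunt x m := (List.chain_cons.mp hch).1
        have hch' : List.Chain D.blunt m (L' ++ [β]) := (List.chain_cons.mp hch).2
        obtain ⟨u', hu1, hu2, hu3, hu4⟩ :=
          ih m hch' (fun q hq => hpre q (List.mem_cons_of_mem _ hq))
        refine ⟨Walk.cons (Edge.bl hxm) u', by simp [length], ?_,
          (lastNR_cons _ hu1).mpr hu3, Or.inl ⟨trivial, by tauto⟩⟩
        rw [mOpen_cons _ hu1]
        refine ⟨?_, hu2⟩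
        rcases hu4 with ⟨hnl, hspec⟩ | ⟨hnl, hspec⟩
        · have hmC : m ∈ D.ancSet C := by
            have := hpre m (List.mem_cons_self)
            tauto
          exact ⟨fun _ => hmC, fun hcon => absurd ⟨trivial, hnl⟩ hcon⟩
        · exact ⟨fun hc => absurd hc.2 hnl,
            fun _ => not_mem_of_not_mem_ancSet hspec⟩

lemma exists_last_bad {P : V → Prop} [DecidablePred P] :
    ∀ L : List V, (∃ m ∈ L, P m) →
      ∃ L₁ m L₂, L = L₁ ++ m :: L₂ ∧ P m ∧ ∀ m' ∈ L₂, ¬ P m'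
  | [], h => by simp at h
  | x :: L', h => by
      by_cases h' : ∃ m ∈ L', P m
      · obtain ⟨L₁, m, L₂, rfl, hm, hL₂⟩ := exists_last_bad L' h'
        exact ⟨x :: L₁, m, L₂, rfl, hm, hL₂⟩
      · push_neg at h'
        have hx : P x := by
          rcases h with ⟨m, hm, hPm⟩
          rcases List.mem_cons.mp hm with rfl | hm
          · exact hPm
          · exact absurd hPm (h' m hm)
        exact ⟨[], x, L', rfl, hx, h'⟩

open Walk in
/-- Key lemma: a blunt weak inducing path yields, for every `C`, a μ-open
walk from `α` to `β` with necks at both ends. -/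
lemma keyWalk (C : Set V) {α β : V} (L : List V)
    (hch : List.Chain D.blunt α (L ++ [β]))
    (hm : ∀ m ∈ L, (D.anc m α ∨ D.anc m β) ∧ m ≠ α ∧ m ≠ β) :
    ∃ u : D.Walk α β, 0 < u.length ∧ u.mOpen C ∧ u.firstNL ∧ u.lastNR := by
  classical
  by_cases hbad : ∃ m ∈ L, ¬ (m ∈ D.ancSet C) ∧ D.anc m α
  · obtain ⟨L₁, m₀, L₂, rfl, hm₀, hL₂⟩ := exists_last_bad _ hbad
    have hmem : m₀ ∈ L₁ ++ m₀ :: L₂ := by simp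
    have hch₂ : List.Chain D.blunt m₀ (L₂ ++ [β]) := by
      rw [List.append_assoc, List.cons_append] at hch
      exact (List.isChain_cons_split.mp hch).2
    have hpre : ∀ q ∈ L₂, q ∈ D.ancSet C ∨ (D.anc q β ∧ q ≠ β) := by
      intro q hq
      by_cases hqC : q ∈ D.ancSet C
      · exact Or.inl hqC
      · have hq' : q ∈ L₁ ++ m₀ :: L₂ := by simp [hq]
        have hqα : ¬ D.anc q α := fun hα => hL₂ q hq ⟨hqC, hα⟩
        have := hm q hq'
        exact Or.inr ⟨this.1.resolve_left hqα, this.2.2⟩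
    obtain ⟨u', hu1, hu2, hu3, hu4⟩ := gWalk C L₂ m₀ hch₂ hpre
    obtain ⟨p, hp1, hp2, hp3, hp4⟩ :=
      exists_bwdWalk C hm₀.2 (hm m₀ hmem).2.1 hm₀.1
    refine ⟨Walk.append p u', ?_, ?_, ?_, ?_⟩
    · rw [length_append]; omega
    · rw [mOpen_append p hp1 hu1]
      exact ⟨hp2, ⟨fun hc => absurd hc.1 hp4,
        fun _ => not_mem_of_not_mem_ancSet hm₀.1⟩, hu2⟩
    · rw [firstNL_append _ hp1]; exact hp3
    · rw [lastNR_append _ hu1]; exact hu3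
  · push_neg at hbad
    have hpre : ∀ q ∈ L, q ∈ D.ancSet C ∨ (D.anc q β ∧ q ≠ β) := by
      intro q hq
      by_cases hqC : q ∈ D.ancSet C
      · exact Or.inl hqC
      · have := hm q hq
        exact Or.inr ⟨this.1.resolve_left (hbad q hq hqC), this.2.2⟩
    cases L with
    | nil =>
        have hb : D.blunt α β := (List.chain_cons.mp hch).1
        exact ⟨Walk.cons (Edge.bl hb) (Walk.nil β), by simp [length], trivial,
          trivial, trivial⟩
    | cons m L' =>
        have hαm : D.blunt α m := (List.chain_cons.mp hch).1
        have hch' : List.Chain D.blunt m (L' ++ [β]) := (List.chain_cons.mp hch).2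
        obtain ⟨u', hu1, hu2, hu3, hu4⟩ :=
          gWalk C L' m hch' (fun q hq => hpre q (List.mem_cons_of_mem _ hq))
        refine ⟨Walk.cons (Edge.bl hαm) u', by simp [length], ?_, trivial,
          (lastNR_cons _ hu1).mpr hu3⟩
        rw [mOpen_cons _ hu1]
        refine ⟨?_, hu2⟩
        rcases hu4 with ⟨hnl, hspec⟩ | ⟨hnl, hspec⟩
        · have hmC : m ∈ D.ancSet C := by
            have := hpre m (List.mem_cons_self)
            tauto
          exact ⟨fun _ => hmC, fun hcon => absurd ⟨trivial, hnl⟩ hcon⟩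
        · exact ⟨fun hc => absurd hc.2 hnl,
            fun _ => not_mem_of_not_mem_ancSet hspec⟩

lemma chain_blunt_reverse {α β : V} {L : List V}
    (hch : List.Chain D.blunt α (L ++ [β])) :
    List.Chain D.blunt β (L.reverse ++ [α]) := by
  have h1 : List.Chain' D.blunt (α :: (L ++ [β])) := hch
  have h2 : List.Chain' (flip D.blunt) ((α :: (L ++ [β])).reverse) := by
    show List.IsChain _ _
    rw [List.isChain_reverse]
    exact h1
  have h3 : (α :: (L ++ [β])).reverse = β :: (L.reverse ++ [α]) := by simp
  rw [h3] at h2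
  have h4 : List.Chain' D.blunt (β :: (L.reverse ++ [α])) :=
    h2.imp (fun a b hab => D.blunt_symm _ _ hab)
  exact h4

end CDG


section AddBlunt

variable {V : Type} {D : CDG V} {α β : V} {hne : α ≠ β}

namespace CDG

lemma ancSet_addBlunt (C : Set V) :
    (D.addBlunt α β hne).ancSet C = D.ancSet C := rfl

/-- Lift an edge of `D` to an edge of `D.addBlunt α β hne`. -/
def liftE {a b : V} : D.Edge a b → (D.addBlunt α β hne).Edge a b
  | .fwd h => .fwd h
  | .bwd h => .bwd h
  | .bl h => .bl (Or.inl h)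

/-- Lift a walk of `D` to a walk of `D.addBlunt α β hne`. -/
def liftW : ∀ {a b : V}, D.Walk a b → (D.addBlunt α β hne).Walk a b
  | _, _, .nil a => .nil a
  | _, _, .cons e w => .cons (liftE e) (liftW w)

lemma liftE_neckLeft {a b : V} (e : D.Edge a b) :
    (liftE (hne := hne) e).neckLeft ↔ e.neckLeft := by
  cases e <;> exact Iff.rfl

lemma liftE_neckRight {a b : V} (e : D.Edge a b) :
    (liftE (hne := hne) e).neckRight ↔ e.neckRight := by
  cases e <;> exact Iff.rfl

lemma liftE_headRight {a b : V} (e : D.Edge a b) :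
    (liftE (hne := hne) e).headRight ↔ e.headRight := by
  cases e <;> exact Iff.rfl

lemma length_liftW : ∀ {a b : V} (w : D.Walk a b),
    (liftW (hne := hne) w).length = w.length
  | _, _, .nil _ => rfl
  | _, _, .cons e w => by
      rw [show liftW (hne := hne) (Walk.cons e w) = Walk.cons (liftE e) (liftW w)
        from rfl]
      simp [Walk.length, length_liftW w]

lemma firstNL_liftW {a b : V} (w : D.Walk a b) :
    (liftW (hne := hne) w).firstNL ↔ w.firstNL := by
  cases w with
  | nil => exact Iff.rfl
  | cons e w => exact liftE_neckLeft e

lemma mOpen_liftW (C : Set V) : ∀ {a b : V} (w : D.Walk a b), w.mOpen C →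
    (liftW (hne := hne) w).mOpen C
  | _, _, .nil _, _ => trivial
  | _, _, .cons e t, h => by
      rw [show liftW (hne := hne) (Walk.cons e t) = Walk.cons (liftE e) (liftW t)
        from rfl]
      rcases Nat.eq_zero_or_pos t.length with h0 | hp
      · exact Walk.mOpen_cons0 _ (by rw [length_liftW]; exact h0)
      · rw [Walk.mOpen_cons _ hp] at h
        rw [Walk.mOpen_cons _ (by rw [length_liftW]; exact hp)]
        exact ⟨(Jct_congr (liftE_neckRight e).symm (firstNL_liftW t).symm).mp h.1,
          mOpen_liftW C t h.2⟩

lemma lastHead_liftW : ∀ {a b : V} (w : D.Walk a b), w.lastHead →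
    (liftW (hne := hne) w).lastHead
  | _, _, .nil _, h => h.elim
  | _, _, .cons e t, h => by
      rw [show liftW (hne := hne) (Walk.cons e t) = Walk.cons (liftE e) (liftW t)
        from rfl]
      rcases Nat.eq_zero_or_pos t.length with h0 | hp
      · rw [Walk.lastHead_cons0 _ h0] at h
        rw [Walk.lastHead_cons0 _ (by rw [length_liftW]; exact h0)]
        exact (liftE_headRight e).mpr h
      · rw [Walk.lastHead_cons _ hp] at h
        rw [Walk.lastHead_cons _ (by rw [length_liftW]; exact hp)]
        exact lastHead_liftW t h

lemma muConn_lift {C : Set V} {a b : V} (h : D.muConn C a b) :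
    (D.addBlunt α β hne).muConn C a b := by
  obtain ⟨haC, w, h1, h2⟩ := h
  exact ⟨haC, liftW w, mOpen_liftW C w h1, lastHead_liftW w h2⟩

open Walk in
lemma replace_cons (C : Set V) {a m b : V}
    (e : (D.addBlunt α β hne).Edge a m) (t : (D.addBlunt α β hne).Walk m b)
    (e' : D.Edge a m) (t' : D.Walk m b)
    (hNL : e'.neckLeft ↔ e.neckLeft) (hNR : e'.neckRight ↔ e.neckRight)
    (hHR : e'.headRight ↔ e.headRight)
    (ht1 : 0 < t'.length ↔ 0 < t.length) (ht2 : t'.firstNL ↔ t.firstNL)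
    (ht3 : t.mOpen C → (t'.mOpen C ∧ (t.lastHead → t'.lastHead))) :
    ∃ w' : D.Walk a b, (0 < w'.length ↔ 0 < (Walk.cons e t).length) ∧
      (w'.firstNL ↔ (Walk.cons e t).firstNL) ∧
      ((Walk.cons e t).mOpen C →
        (w'.mOpen C ∧ ((Walk.cons e t).lastHead → w'.lastHead))) := by
  refine ⟨Walk.cons e' t', by simp [Walk.length], hNL, ?_⟩
  intro hop
  rcases Nat.eq_zero_or_pos t.length with h0 | hp
  · have h0' : t'.length = 0 := by
      rcases Nat.eq_zero_or_pos t'.length with h | h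
      · exact h
      · rw [h0] at ht1; exact absurd (ht1.mp h) (by omega)
    refine ⟨Walk.mOpen_cons0 _ h0', ?_⟩
    intro hlh
    rw [Walk.lastHead_cons0 _ h0] at hlh
    rw [Walk.lastHead_cons0 _ h0']
    exact hHR.mpr hlh
  · have hp' : 0 < t'.length := ht1.mpr hp
    rw [Walk.mOpen_cons _ hp] at hop
    have hop' := ht3 hop.2
    constructor
    · rw [Walk.mOpen_cons _ hp']
      exact ⟨(Jct_congr hNR ht2).mpr hop.1, hop'.1⟩
    · intro hlh
      rw [Walk.lastHead_cons _ hp] at hlh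
      rw [Walk.lastHead_cons _ hp']
      exact hop'.2 hlh

open Walk in
lemma replace_subst (C : Set V) {x y b : V}
    (u : D.Walk x y) (hu1 : 0 < u.length) (hu2 : u.mOpen C)
    (hu3 : u.firstNL) (hu4 : u.lastNR)
    (e : (D.addBlunt α β hne).Edge x y)
    (hNL : e.neckLeft) (hNR : e.neckRight) (hHR : ¬ e.headRight)
    (t : (D.addBlunt α β hne).Walk y b) (t' : D.Walk y b)
    (ht1 : 0 < t'.length ↔ 0 < t.length) (ht2 : t'.firstNL ↔ t.firstNL)
    (ht3 : t.mOpen C → (t'.mOpen C ∧ (t.lastHead → t'.lastHead))) :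
    ∃ w' : D.Walk x b, (0 < w'.length ↔ 0 < (Walk.cons e t).length) ∧
      (w'.firstNL ↔ (Walk.cons e t).firstNL) ∧
      ((Walk.cons e t).mOpen C →
        (w'.mOpen C ∧ ((Walk.cons e t).lastHead → w'.lastHead))) := by
  refine ⟨u.append t', ?_, ?_, ?_⟩
  · exact iff_of_true (by rw [Walk.length_append]; omega) (by simp [Walk.length])
  · rw [Walk.firstNL_append _ hu1]
    exact iff_of_true hu3 hNL
  · intro hop
    rcases Nat.eq_zero_or_pos t.length with h0 | hp
    · have h0' : t'.length = 0 := by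
        rcases Nat.eq_zero_or_pos t'.length with h | h
        · exact h
        · rw [h0] at ht1; exact absurd (ht1.mp h) (by omega)
      refine ⟨Walk.mOpen_append_right0 u h0' hu2, ?_⟩
      intro hlh
      rw [Walk.lastHead_cons0 _ h0] at hlh
      exact absurd hlh hHR
    · have hp' : 0 < t'.length := ht1.mpr hp
      rw [Walk.mOpen_cons _ hp] at hop
      have hop' := ht3 hop.2
      constructor
      · rw [Walk.mOpen_append u hu1 hp']
        exact ⟨hu2, (Jct_congr (iff_of_true hu4 hNR) ht2).mpr hop.1, hop'.1⟩
      · intro hlh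
        rw [Walk.lastHead_cons _ hp] at hlh
        rw [Walk.lastHead_append u hp']
        exact hop'.2 hlh

lemma replaceWalk (C : Set V) (uab : D.Walk α β) (uba : D.Walk β α)
    (hab1 : 0 < uab.length) (hab2 : uab.mOpen C) (hab3 : uab.firstNL)
    (hab4 : uab.lastNR)
    (hba1 : 0 < uba.length) (hba2 : uba.mOpen C) (hba3 : uba.firstNL)
    (hba4 : uba.lastNR) :
    ∀ {a b : V} (w : (D.addBlunt α β hne).Walk a b),
      ∃ w' : D.Walk a b, (0 < w'.length ↔ 0 < w.length) ∧
        (w'.firstNL ↔ w.firstNL) ∧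
        (w.mOpen C → (w'.mOpen C ∧ (w.lastHead → w'.lastHead)))
  | _, _, .nil a =>
      ⟨Walk.nil a, Iff.rfl, Iff.rfl, fun _ => ⟨trivial, fun h => h.elim⟩⟩
  | _, _, .cons e t => by
      obtain ⟨t', ht1, ht2, ht3⟩ :=
        replaceWalk C uab uba hab1 hab2 hab3 hab4 hba1 hba2 hba3 hba4 t
      cases e with
      | fwd h =>
          exact replace_cons C _ t (Edge.fwd h) t' Iff.rfl Iff.rfl Iff.rfl
            ht1 ht2 ht3
      | bwd h =>
          exact replace_cons C _ t (Edge.bwd h) t' Iff.rfl Iff.rfl Iff.rfl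
            ht1 ht2 ht3
      | bl hb =>
          rcases hb with hb | ⟨rfl, rfl⟩ | ⟨rfl, rfl⟩
          · exact replace_cons C _ t (Edge.bl hb) t' Iff.rfl Iff.rfl Iff.rfl
              ht1 ht2 ht3
          · exact replace_subst C uab hab1 hab2 hab3 hab4
              (Edge.bl (Or.inr (Or.inl ⟨rfl, rfl⟩))) trivial trivial
              not_false t t' ht1 ht2 ht3
          · exact replace_subst C uba hba1 hba2 hba3 hba4
              (Edge.bl (Or.inr (Or.inr ⟨rfl, rfl⟩))) trivial trivial
              not_false t t' ht1 ht2 ht3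

end CDG

end AddBlunt

/-- If α and β are joined by a weak inducing path consisting
solely of blunt edges, then adding α⫞β gives a Markov equivalent cDG. -/
theorem stmt7 {V : Type} (D : CDG V) (hloops : ∀ a, D.dir a a) (α β : V)
    (hne : α ≠ β)
    (h : ∃ w : D.Walk α β, CDG.IsColliderPath w ∧ w.allBlunt ∧
        ∀ m ∈ w.internal, D.anc m α ∨ D.anc m β) :
    (D.addBlunt α β hne).indep = D.indep := by
  classical
  obtain ⟨w, ⟨hlen, hnodup, -⟩, hblunt, hanc⟩ := h
  have hch := CDG.Walk.toChain w hlen hblunt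
  rw [CDG.Walk.support_eq w hlen] at hnodup
  rcases List.nodup_cons.mp hnodup with ⟨hαmem, hnd2⟩
  rcases List.nodup_append'.mp hnd2 with ⟨-, -, hdisj⟩
  have hm : ∀ m ∈ w.internal, (D.anc m α ∨ D.anc m β) ∧ m ≠ α ∧ m ≠ β := by
    intro m hmem
    refine ⟨hanc m hmem, ?_, ?_⟩
    · rintro rfl; exact hαmem (List.mem_append_left _ hmem)
    · rintro rfl; exact hdisj hmem (by simp)
  have hm' : ∀ m ∈ w.internal.reverse,
      (D.anc m β ∨ D.anc m α) ∧ m ≠ β ∧ m ≠ α := by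
    intro m hmem
    obtain ⟨h1, h2, h3⟩ := hm m (List.mem_reverse.mp hmem)
    exact ⟨h1.symm, h3, h2⟩
  ext ⟨A, B, C⟩
  simp only [CDG.indep, Set.mem_setOf_eq]
  obtain ⟨uab, hab1, hab2, hab3, hab4⟩ := D.keyWalk C w.internal hch hm
  obtain ⟨uba, hba1, hba2, hba3, hba4⟩ :=
    D.keyWalk C w.internal.reverse (CDG.chain_blunt_reverse hch) hm'
  constructor
  · intro hsep a ha b hb hconn
    exact hsep a ha b hb (CDG.muConn_lift (hne := hne) hconn)
  · intro hsep a ha b hb hconn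
    obtain ⟨haC, ww, h1, h2⟩ := hconn
    obtain ⟨w', -, -, h3⟩ := CDG.replaceWalk C uab uba hab1 hab2 hab3 hab4
      hba1 hba2 hba3 hba4 ww
    exact hsep a ha b hb ⟨haC, w', (h3 h1).1, (h3 h1).2 h2⟩
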